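/- For every integer α ≥ 3, one has 2α/tan(π/α) + (π − 2)α + α² ≤ 1.64·(α − 2)² + 7.69·(α − 2) + 6.74. -/

import Mathlib

open Real

/-- Cotangent bound: `3·x·cos x ≤ (3 - x²)·sin x` on `[0, π/2]`. -/
lemma aux_cot_bound {x : ℝ} (hx0 : 0 ≤ x) (hx2 : x ≤ π / 2) :
    3 * x * Real.cos x ≤ (3 - x ^ 2) * Real.sin x := by
  set f : ℝ → ℝ := fun y => (3 - y ^ 2) * Real.sin y - 3 * y * Real.cos y with hf
  have hd : ∀ y : ℝ, HasDerivAt f (y * Real.sin y - y ^ 2 * Real.cos y) y := by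
    intro y
    have h1 : HasDerivAt (fun y : ℝ => (3 : ℝ) - y ^ 2) (-(2 * y)) y := by
      simpa using ((hasDerivAt_pow 2 y).const_sub 3)
    have h2 : HasDerivAt (fun y : ℝ => (3 : ℝ) * y) 3 y := by
      simpa using (hasDerivAt_id y).const_mul 3
    have h3 := (h1.mul (Real.hasDerivAt_sin y)).sub
      (h2.mul (Real.hasDerivAt_cos y))
    exact h3.congr_deriv (by ring)
  have hmono : MonotoneOn f (Set.Icc 0 (π / 2)) := by
    apply monotoneOn_of_deriv_nonneg (convex_Icc _ _)
    · exact (Continuous.continuousOn (by continuity))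
    · intro y hy
      exact (hd y).differentiableAt.differentiableWithinAt
    · intro y hy
      rw [interior_Icc] at hy
      rw [(hd y).deriv]
      have hy0 : 0 < y := hy.1
      have hy2 : y < π / 2 := hy.2
      have htan : y ≤ Real.tan y := Real.le_tan hy0.le hy2
      have hcos : 0 < Real.cos y :=
        Real.cos_pos_of_mem_Ioo ⟨by linarith [Real.pi_pos], hy2⟩
      have hsc : y * Real.cos y ≤ Real.sin y := by
        have := mul_le_mul_of_nonneg_right htan hcos.le
        rwa [Real.tan_eq_sin_div_cos, div_mul_cancel₀ _ hcos.ne'] at this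
      nlinarith
  have h0 : f 0 ≤ f x := by
    apply hmono (Set.left_mem_Icc.2 (by positivity)) ⟨hx0, hx2⟩ hx0
  simp only [hf] at h0
  simp at h0
  linarith

/-- The analytic core of Theorem 1: for every integer `α ≥ 3`, the
ropelength bound obtained from an arc-presentation with `α` half-planes is at
most `1.64·c² + 7.69·c + 6.74` evaluated at crossing number `c = α - 2`. -/
theorem analytic_core_theorem_one (α : ℕ) (hα : 3 ≤ α) :
    2 * (α : ℝ) / Real.tan (π / α) + (π - 2) * α + (α : ℝ) ^ 2 ≤
      1.64 * ((α : ℝ) - 2) ^ 2 + 7.69 * ((α : ℝ) - 2) + 6.74 := by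
  have hπ1 := Real.pi_gt_d6
  have hπ2 := Real.pi_lt_d6
  rcases eq_or_lt_of_le hα with h3 | h4
  · -- α = 3
    subst h3
    have hsqrt3 : Real.sqrt 3 ≤ 1.7321 := by
      rw [show (1.7321 : ℝ) = Real.sqrt (1.7321 ^ 2) by
        rw [Real.sqrt_sq (by norm_num)]]
      exact Real.sqrt_le_sqrt (by norm_num)
    have hsqrt3' : (1 : ℝ) ≤ Real.sqrt 3 := by
      rw [show (1 : ℝ) = Real.sqrt 1 by simp]
      exact Real.sqrt_le_sqrt (by norm_num)
    have hsq : Real.sqrt 3 ^ 2 = 3 := Real.sq_sqrt (by norm_num)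
    have htan : Real.tan (π / (3 : ℕ)) = Real.sqrt 3 := by
      norm_num [Real.tan_pi_div_three]
    rw [htan]
    have hdiv : 2 * ((3 : ℕ) : ℝ) / Real.sqrt 3 = 2 * Real.sqrt 3 := by
      rw [div_eq_iff (by positivity : (0:ℝ) < Real.sqrt 3).ne']
      push_cast
      nlinarith
    rw [hdiv]
    push_cast
    nlinarith
  · -- α ≥ 4
    have hα4 : (4 : ℕ) ≤ α := h4
    have hA4 : (4 : ℝ) ≤ (α : ℝ) := by exact_mod_cast hα4
    set A : ℝ := (α : ℝ) with hA
    have hA0 : 0 < A := by linarith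
    have hπ0 : 0 < π := Real.pi_pos
    set x : ℝ := π / A with hxdef
    have hx0 : 0 < x := by positivity
    have hx4 : x ≤ π / 4 := by
      rw [hxdef]
      apply div_le_div_of_nonneg_left hπ0.le (by norm_num) hA4
    have hx2 : x < π / 2 := by
      calc x ≤ π / 4 := hx4
        _ < π / 2 := by linarith
    have hxsq : x ^ 2 < 3 := by
      have : x ≤ π / 4 := hx4
      nlinarith
    have hcos : 0 < Real.cos x :=
      Real.cos_pos_of_mem_Ioo ⟨by linarith, hx2⟩
    have hsin : 0 < Real.sin x :=
      Real.sin_pos_of_pos_of_lt_pi hx0 (by linarith)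
    have hcot := aux_cot_bound hx0.le hx2.le
    -- tan x ≥ 3x/(3 - x²)
    have hlb : 3 * x / (3 - x ^ 2) ≤ Real.tan x := by
      rw [Real.tan_eq_sin_div_cos, div_le_div_iff₀ (by linarith) hcos]
      nlinarith
    have hlb0 : 0 < 3 * x / (3 - x ^ 2) := by
      apply div_pos (by linarith) (by linarith)
    have hkey : 2 * A / Real.tan x ≤ 2 * A / (3 * x / (3 - x ^ 2)) :=
      div_le_div_of_nonneg_left (by linarith) hlb0 hlb
    have heq : 2 * A / (3 * x / (3 - x ^ 2)) = 2 * A ^ 2 / π - 2 * π / 3 := by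
      rw [hxdef]
      field_simp
    rw [heq] at hkey
    have hπA : π / A = x := rfl
    have hfin : 2 * A ^ 2 / π - 2 * π / 3 + (π - 2) * A + A ^ 2 ≤
        1.64 * (A - 2) ^ 2 + 7.69 * (A - 2) + 6.74 := by
      have hdivle : 2 * A ^ 2 / π ≤ 2 / 3.141592 * A ^ 2 := by
        rw [show (2 : ℝ) / 3.141592 * A ^ 2 = 2 * A ^ 2 / 3.141592 by ring]
        gcongr
      nlinarith [sq_nonneg (A - 4), mul_lt_mul_of_pos_left hπ2 hA0,
        mul_lt_mul_of_pos_left hπ1 hA0]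
    calc 2 * A / Real.tan (π / A) + (π - 2) * A + A ^ 2
        = 2 * A / Real.tan x + (π - 2) * A + A ^ 2 := by rw [hπA]
      _ ≤ 2 * A ^ 2 / π - 2 * π / 3 + (π - 2) * A + A ^ 2 := by linarith
      _ ≤ _ := hfin
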